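/- Let α be the uniform discrete measure on points x₁,…,x_n ∈ ℝ^d (each with mass 1/n) and β the uniform discrete measure on points x̃₁,…,x̃_m (each with mass 1/m), with cost matrix D given by squared Euclidean distances. Let α′ be obtained from α by adding one outlier point x′, with all n+1 points of α′ given uniform mass 1/(n+1). Then the unregularized unbalanced optimal transport discrepancies satisfy W^{0,κ}(α′, β) − W^{0,κ}(α, β) ≤ 2κ·(1 − exp(−Σ_{j=1}^m ‖x′ − x̃_j‖²/(2κ)))/(n+1), and in particular the increase is upper bounded by 2κ/(n+1). -/

import Mathlib

open scoped BigOperators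

/-- The generalized KL divergence `KL(z‖a) = Σ_i (z_i log(z_i/a_i) - z_i + a_i)`.
(Since `Real.log 0 = 0` in Lean, the convention `0·log 0 = 0` is automatic.) -/
noncomputable def genKL {n : ℕ} (z a : Fin n → ℝ) : ℝ :=
  ∑ i, (z i * Real.log (z i / a i) - z i + a i)

/-- The unregularized unbalanced optimal transport discrepancy
`W^{0,κ}(a,b) = inf_{π ≥ 0} [Σ_{ij} D_{ij} π_{ij} + κ KL(π𝟙‖a) + κ KL(πᵀ𝟙‖b)]`. -/
noncomputable def UOT {n m : ℕ} (D : Matrix (Fin n) (Fin m) ℝ)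
    (a : Fin n → ℝ) (b : Fin m → ℝ) (κ : ℝ) : ℝ :=
  sInf {c : ℝ | ∃ π : Matrix (Fin n) (Fin m) ℝ, (∀ i j, 0 ≤ π i j) ∧
    c = (∑ i, ∑ j, D i j * π i j)
        + κ * genKL (fun i => ∑ j, π i j) a
        + κ * genKL (fun j => ∑ i, π i j) b}

lemma log_div_expand {z b : ℝ} (hz : 0 ≤ z) (hb : b ≠ 0) :
    z * Real.log (z / b) = z * Real.log z - z * Real.log b := by
  rcases eq_or_lt_of_le hz with h | h
  · simp [← h]
  · rw [Real.log_div h.ne' hb]; ring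

lemma kl_term_nonneg {z a : ℝ} (hz : 0 ≤ z) (ha : 0 < a) :
    0 ≤ z * Real.log (z / a) - z + a := by
  rcases eq_or_lt_of_le hz with h | h
  · simp [← h]; linarith
  · have h1 : Real.log (a / z) ≤ a / z - 1 := Real.log_le_sub_one_of_pos (by positivity)
    have h2 : Real.log (a / z) = -Real.log (z / a) := by
      rw [← Real.log_inv]; congr 1; field_simp
    rw [h2] at h1
    have h3 : z * (-Real.log (z / a)) ≤ z * (a / z - 1) :=
      mul_le_mul_of_nonneg_left h1 h.le
    have h4 : z * (a / z - 1) = a - z := by field_simp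
    rw [h4, mul_neg] at h3
    linarith

lemma convex_kl {b : ℝ} (hb : 0 < b) {z₁ z₂ s : ℝ} (h1 : 0 ≤ z₁) (h2 : 0 ≤ z₂)
    (hs0 : 0 ≤ s) (hs1 : s ≤ 1) :
    (s * z₁ + (1 - s) * z₂) * Real.log ((s * z₁ + (1 - s) * z₂) / b)
        - (s * z₁ + (1 - s) * z₂) + b
      ≤ s * (z₁ * Real.log (z₁ / b) - z₁ + b)
        + (1 - s) * (z₂ * Real.log (z₂ / b) - z₂ + b) := by
  have hc := Real.convexOn_mul_log.2 (Set.mem_Ici.2 h1) (Set.mem_Ici.2 h2) hs0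
    (by linarith : (0:ℝ) ≤ 1 - s) (by ring : s + (1 - s) = 1)
  simp only [smul_eq_mul] at hc
  have hM : 0 ≤ s * z₁ + (1 - s) * z₂ := by
    have := mul_nonneg hs0 h1
    have := mul_nonneg (by linarith : (0:ℝ) ≤ 1 - s) h2
    linarith
  rw [log_div_expand hM hb.ne', log_div_expand h1 hb.ne', log_div_expand h2 hb.ne']
  nlinarith [hc]

lemma genKL_nonneg {n : ℕ} {z a : Fin n → ℝ} (hz : ∀ i, 0 ≤ z i) (ha : ∀ i, 0 < a i) :
    0 ≤ genKL z a :=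
  Finset.sum_nonneg fun i _ => kl_term_nonneg (hz i) (ha i)

lemma UOT_obj_nonneg {n m : ℕ} {D : Matrix (Fin n) (Fin m) ℝ} (hD : ∀ i j, 0 ≤ D i j)
    {a : Fin n → ℝ} {b : Fin m → ℝ} (ha : ∀ i, 0 < a i) (hb : ∀ j, 0 < b j)
    {κ : ℝ} (hκ : 0 ≤ κ) {π : Matrix (Fin n) (Fin m) ℝ} (hπ : ∀ i j, 0 ≤ π i j) :
    0 ≤ (∑ i, ∑ j, D i j * π i j) + κ * genKL (fun i => ∑ j, π i j) a
        + κ * genKL (fun j => ∑ i, π i j) b := by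
  have h1 : 0 ≤ ∑ i, ∑ j, D i j * π i j :=
    Finset.sum_nonneg fun i _ => Finset.sum_nonneg fun j _ => mul_nonneg (hD i j) (hπ i j)
  have h2 : 0 ≤ genKL (fun i => ∑ j, π i j) a :=
    genKL_nonneg (fun i => Finset.sum_nonneg fun j _ => hπ i j) ha
  have h3 : 0 ≤ genKL (fun j => ∑ i, π i j) b :=
    genKL_nonneg (fun j => Finset.sum_nonneg fun i _ => hπ i j) hb
  have := mul_nonneg hκ h2
  have := mul_nonneg hκ h3
  linarith

lemma final_arith {κ s NN C R CL CL' P q e : ℝ} (hκ : 0 < κ) (hNN : 0 < NN)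
    (hs1 : s ≤ 1) (h1s : 1 - s = 1 / NN)
    (hCcol' : κ * CL' ≤ κ * (s * CL + (1 - s) * (1 - P / κ - q * Real.log q - q)))
    (hobj0 : 0 ≤ C + κ * R + κ * CL) (he : e ≤ q) :
    s * C + P / NN + κ * (s * R + (q * Real.log q - q + 1) / NN) + κ * CL'
      ≤ C + κ * R + κ * CL + 2 * κ * (1 - e) / NN := by
  have hmid : s * C + P / NN
      + κ * (s * R + (q * Real.log q - q + 1) / NN)
      + κ * (s * CL + (1 - s) * (1 - P / κ - q * Real.log q - q))
      = s * (C + κ * R + κ * CL) + (2 * κ - 2 * κ * q) / NN := by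
    rw [h1s]
    field_simp
    ring
  have hfinal : s * (C + κ * R + κ * CL) ≤ C + κ * R + κ * CL := by
    nlinarith [mul_nonneg (by linarith : (0:ℝ) ≤ 1 - s) hobj0]
  have hq' : (2 * κ - 2 * κ * q) / NN ≤ 2 * κ * (1 - e) / NN := by
    have h : 2 * κ - 2 * κ * q ≤ 2 * κ * (1 - e) := by nlinarith
    exact div_le_div_of_nonneg_right h hNN.le
  linarith [hCcol', hmid, hfinal, hq']

set_option maxHeartbeats 1000000 in
/-- Adding an outlier `x'` to the uniform discrete measure `α` on `x₁,…,x_n`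
(the disturbed measure `α'` being uniform on the `n+1` points, with squared
Euclidean costs to the support `x̃₁,…,x̃_m` of the uniform measure `β`) increases
the unbalanced optimal transport discrepancy `W^{0,κ}` by at most
`2κ(1 − exp(−Σ_j ‖x' − x̃_j‖²/(2κ)))/(n+1)`, which is itself at most `2κ/(n+1)`. -/
theorem stmt_5 {d n m : ℕ} (hn : 0 < n) (hm : 0 < m) (κ : ℝ) (hκ : 0 < κ)
    (x : Fin n → EuclideanSpace ℝ (Fin d)) (xt : Fin m → EuclideanSpace ℝ (Fin d))
    (x' : EuclideanSpace ℝ (Fin d)) :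
    UOT (fun i j => ‖(Fin.snoc x x' : Fin (n+1) → EuclideanSpace ℝ (Fin d)) i - xt j‖ ^ 2)
        (fun _ : Fin (n + 1) => 1 / ((n : ℝ) + 1)) (fun _ : Fin m => 1 / (m : ℝ)) κ
      - UOT (fun i j => ‖x i - xt j‖ ^ 2)
        (fun _ : Fin n => 1 / (n : ℝ)) (fun _ : Fin m => 1 / (m : ℝ)) κ
      ≤ 2 * κ * (1 - Real.exp (-(∑ j, ‖x' - xt j‖ ^ 2) / (2 * κ))) / ((n : ℝ) + 1) ∧
    2 * κ * (1 - Real.exp (-(∑ j, ‖x' - xt j‖ ^ 2) / (2 * κ))) / ((n : ℝ) + 1)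
      ≤ 2 * κ / ((n : ℝ) + 1) := by
  have hN : (0:ℝ) < (n : ℝ) + 1 := by positivity
  constructor
  · -- main bound
    have hn' : ((n:ℝ)) ≠ 0 := Nat.cast_ne_zero.2 hn.ne'
    have hm' : ((m:ℝ)) ≠ 0 := Nat.cast_ne_zero.2 hm.ne'
    have hnpos : (0:ℝ) < (n:ℝ) := by exact_mod_cast hn
    have hmpos : (0:ℝ) < (m:ℝ) := by exact_mod_cast hm
    have han : (0:ℝ) < 1 / (n:ℝ) := by positivity
    have ham : (0:ℝ) < 1 / (m:ℝ) := by positivity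
    have haN : (0:ℝ) < 1 / ((n:ℝ)+1) := by positivity
    have : Nonempty (Fin m) := ⟨⟨0, hm⟩⟩
    simp only [UOT]
    set E : Fin m → ℝ := fun j => Real.exp (-(‖x' - xt j‖ ^ 2) / κ) with hEdef
    have hE : ∀ j, 0 < E j := fun j => Real.exp_pos _
    set G : ℝ := ∑ j, E j with hGdef
    have hG : 0 < G := Finset.sum_pos (fun j _ => hE j) Finset.univ_nonempty
    set q : ℝ := Real.sqrt (G / m) with hqdef
    have hq : 0 < q := Real.sqrt_pos.2 (by positivity)
    have hq2 : q * q = G / m := Real.mul_self_sqrt (by positivity)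
    have hq2' : (m:ℝ) * (q * q) = G := by rw [hq2]; field_simp
    set u : Fin m → ℝ := fun j => E j / (m * q) with hudef
    have hu : ∀ j, 0 ≤ u j := fun j => by
      simp only [hudef]; positivity
    have hU : ∑ j, u j = q := by
      have h1 : ∑ j, u j = G / ((m:ℝ) * q) := by
        simp only [hudef]
        rw [← Finset.sum_div, ← hGdef]
      rw [h1, div_eq_iff (by positivity : ((m:ℝ) * q) ≠ 0)]
      linear_combination (-1 : ℝ) * hq2'
    set s : ℝ := (n:ℝ) / ((n:ℝ)+1) with hsdef
    have hs0 : 0 ≤ s := by rw [hsdef]; positivity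
    have hs1 : s ≤ 1 := by rw [hsdef, div_le_one hN]; linarith
    have h1s : 1 - s = 1 / ((n:ℝ)+1) := by rw [hsdef]; field_simp; ring
    -- boundedness / nonemptiness of the feasible-value sets
    have hbddA : BddBelow {c : ℝ | ∃ π : Matrix (Fin (n+1)) (Fin m) ℝ, (∀ i j, 0 ≤ π i j) ∧
        c = (∑ i, ∑ j, ‖(Fin.snoc x x' : Fin (n+1) → EuclideanSpace ℝ (Fin d)) i - xt j‖ ^ 2 * π i j)
            + κ * genKL (fun i => ∑ j, π i j) (fun _ => 1 / ((n:ℝ) + 1))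
            + κ * genKL (fun j => ∑ i, π i j) (fun _ => 1 / (m:ℝ))} := by
      refine ⟨0, fun c hc => ?_⟩
      obtain ⟨π, hπ, rfl⟩ := hc
      exact UOT_obj_nonneg (fun i j => by positivity) (fun _ => haN) (fun _ => ham) hκ.le hπ
    have hBne : {c : ℝ | ∃ π : Matrix (Fin n) (Fin m) ℝ, (∀ i j, 0 ≤ π i j) ∧
        c = (∑ i, ∑ j, ‖x i - xt j‖ ^ 2 * π i j)
            + κ * genKL (fun i => ∑ j, π i j) (fun _ => 1 / (n:ℝ))
            + κ * genKL (fun j => ∑ i, π i j) (fun _ => 1 / (m:ℝ))}.Nonempty :=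
      ⟨_, 0, fun i j => le_of_eq rfl, rfl⟩
    have hemain : Real.exp (-(∑ j, ‖x' - xt j‖ ^ 2) / (2*κ)) ≤ q := by
      have h1 : ∀ j, Real.exp (-(∑ j', ‖x' - xt j'‖ ^ 2) / κ) ≤ E j := by
        intro j
        simp only [hEdef]
        apply Real.exp_le_exp.2
        have hterm : ‖x' - xt j‖ ^ 2 ≤ ∑ j', ‖x' - xt j'‖ ^ 2 :=
          Finset.single_le_sum (f := fun j' => ‖x' - xt j'‖ ^ 2)
            (fun j' _ => by positivity) (Finset.mem_univ j)
        apply div_le_div_of_nonneg_right ?_ hκ.le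
        linarith
      have h2 : Real.exp (-(∑ j, ‖x' - xt j‖ ^ 2) / κ) ≤ G / m := by
        have h3 : (m:ℝ) * Real.exp (-(∑ j, ‖x' - xt j‖ ^ 2) / κ) ≤ G := by
          calc (m:ℝ) * Real.exp (-(∑ j, ‖x' - xt j‖ ^ 2) / κ)
              = ∑ _j : Fin m, Real.exp (-(∑ j, ‖x' - xt j‖ ^ 2) / κ) := by
                rw [Finset.sum_const, Finset.card_univ, Fintype.card_fin, nsmul_eq_mul]
            _ ≤ ∑ j, E j := Finset.sum_le_sum fun j _ => h1 j
            _ = G := hGdef.symm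
        rw [le_div_iff₀ hmpos]
        linarith
      have h4 : Real.exp (-(∑ j, ‖x' - xt j‖ ^ 2) / κ)
          = (Real.exp (-(∑ j, ‖x' - xt j‖ ^ 2) / (2*κ))) ^ 2 := by
        rw [sq, ← Real.exp_add]
        congr 1
        field_simp
        ring
      calc Real.exp (-(∑ j, ‖x' - xt j‖ ^ 2) / (2*κ))
          = Real.sqrt (Real.exp (-(∑ j, ‖x' - xt j‖ ^ 2) / κ)) := by
            rw [h4, Real.sqrt_sq (Real.exp_pos _).le]
        _ ≤ Real.sqrt (G / m) := Real.sqrt_le_sqrt h2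
        _ = q := hqdef.symm
    -- the key estimate for each feasible value of the small problem
    have key : ∀ c : ℝ, (∃ π : Matrix (Fin n) (Fin m) ℝ, (∀ i j, 0 ≤ π i j) ∧
        c = (∑ i, ∑ j, ‖x i - xt j‖ ^ 2 * π i j)
            + κ * genKL (fun i => ∑ j, π i j) (fun _ => 1 / (n:ℝ))
            + κ * genKL (fun j => ∑ i, π i j) (fun _ => 1 / (m:ℝ))) →
        sInf {c : ℝ | ∃ π : Matrix (Fin (n+1)) (Fin m) ℝ, (∀ i j, 0 ≤ π i j) ∧
          c = (∑ i, ∑ j, ‖(Fin.snoc x x' : Fin (n+1) → EuclideanSpace ℝ (Fin d)) i - xt j‖ ^ 2 * π i j)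
              + κ * genKL (fun i => ∑ j, π i j) (fun _ => 1 / ((n:ℝ) + 1))
              + κ * genKL (fun j => ∑ i, π i j) (fun _ => 1 / (m:ℝ))}
          ≤ c + 2 * κ * (1 - Real.exp (-(∑ j, ‖x' - xt j‖ ^ 2) / (2 * κ))) / ((n:ℝ) + 1) := by
      rintro c ⟨π, hπ, rfl⟩
      set π' : Matrix (Fin (n+1)) (Fin m) ℝ :=
        Fin.snoc (fun i j => s * π i j) (fun j => u j / ((n:ℝ)+1)) with hπ'def
      have hπ'cast : ∀ (i : Fin n) (j : Fin m), π' i.castSucc j = s * π i j := by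
        intro i j
        simp only [hπ'def, Fin.snoc_castSucc]
      have hπ'last : ∀ j, π' (Fin.last n) j = u j / ((n:ℝ)+1) := by
        intro j
        simp only [hπ'def, Fin.snoc_last]
      have hπ'pos : ∀ i j, 0 ≤ π' i j := by
        intro i j
        refine Fin.lastCases ?_ ?_ i
        · rw [hπ'last]; positivity
        · intro k; rw [hπ'cast]; exact mul_nonneg hs0 (hπ k j)
      have hmem : ((∑ i, ∑ j, ‖(Fin.snoc x x' : Fin (n+1) → EuclideanSpace ℝ (Fin d)) i - xt j‖ ^ 2 * π' i j)
          + κ * genKL (fun i => ∑ j, π' i j) (fun _ => 1 / ((n:ℝ) + 1))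
          + κ * genKL (fun j => ∑ i, π' i j) (fun _ => 1 / (m:ℝ)))
          ∈ {c : ℝ | ∃ π : Matrix (Fin (n+1)) (Fin m) ℝ, (∀ i j, 0 ≤ π i j) ∧
          c = (∑ i, ∑ j, ‖(Fin.snoc x x' : Fin (n+1) → EuclideanSpace ℝ (Fin d)) i - xt j‖ ^ 2 * π i j)
              + κ * genKL (fun i => ∑ j, π i j) (fun _ => 1 / ((n:ℝ) + 1))
              + κ * genKL (fun j => ∑ i, π i j) (fun _ => 1 / (m:ℝ))} :=
        ⟨π', hπ'pos, rfl⟩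
      refine le_trans (csInf_le hbddA hmem) ?_
      -- cost decomposition
      have hA : (∑ i, ∑ j, ‖(Fin.snoc x x' : Fin (n+1) → EuclideanSpace ℝ (Fin d)) i - xt j‖ ^ 2 * π' i j)
          = s * (∑ i, ∑ j, ‖x i - xt j‖ ^ 2 * π i j)
            + (∑ j, ‖x' - xt j‖ ^ 2 * u j) / ((n:ℝ)+1) := by
        rw [Fin.sum_univ_castSucc]
        congr 1
        · rw [Finset.mul_sum]
          refine Finset.sum_congr rfl fun i _ => ?_
          rw [Finset.mul_sum]
          refine Finset.sum_congr rfl fun j _ => ?_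
          rw [hπ'cast, Fin.snoc_castSucc]
          ring
        · rw [Finset.sum_div]
          refine Finset.sum_congr rfl fun j _ => ?_
          rw [hπ'last, Fin.snoc_last]
          ring
      -- row KL decomposition
      have hB : genKL (fun i : Fin (n+1) => ∑ j, π' i j) (fun _ => 1 / ((n:ℝ)+1))
          = s * genKL (fun i => ∑ j, π i j) (fun _ => 1 / (n:ℝ))
            + (q * Real.log q - q + 1) / ((n:ℝ)+1) := by
        simp only [genKL]
        rw [Fin.sum_univ_castSucc]
        congr 1
        · rw [Finset.mul_sum]
          refine Finset.sum_congr rfl fun i _ => ?_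
          have hrow : ∑ j, π' i.castSucc j = s * ∑ j, π i j :=
            Finset.sum_congr rfl (fun j _ => hπ'cast i j) |>.trans (Finset.mul_sum _ _ _).symm
          rw [hrow]
          have harg : s * (∑ j, π i j) / (1 / ((n:ℝ)+1)) = (∑ j, π i j) / (1 / (n:ℝ)) := by
            rw [hsdef]; field_simp
          have hcoef : (1:ℝ) / ((n:ℝ)+1) = s * (1 / (n:ℝ)) := by
            rw [hsdef]; field_simp
          rw [harg, hcoef]
          ring
        · have hlast : ∑ j, π' (Fin.last n) j = q / ((n:ℝ)+1) := by
            calc ∑ j, π' (Fin.last n) j = ∑ j, u j / ((n:ℝ)+1) :=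
                  Finset.sum_congr rfl fun j _ => hπ'last j
              _ = (∑ j, u j) / ((n:ℝ)+1) := (Finset.sum_div _ _ _).symm
              _ = q / ((n:ℝ)+1) := by rw [hU]
          rw [hlast]
          have harg2 : q / ((n:ℝ)+1) / (1 / ((n:ℝ)+1)) = q := by field_simp
          rw [harg2]
          field_simp
      -- column sums
      have hColsum : ∀ j, (∑ i : Fin (n+1), π' i j) = s * (∑ i, π i j) + (1 - s) * u j := by
        intro j
        rw [Fin.sum_univ_castSucc]
        congr 1
        · rw [Finset.mul_sum]
          exact Finset.sum_congr rfl fun i _ => hπ'cast i j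
        · rw [hπ'last, h1s]
          ring
      -- column KL convexity bound
      have hCcol : genKL (fun j => ∑ i : Fin (n+1), π' i j) (fun _ => 1 / (m:ℝ))
          ≤ s * genKL (fun j => ∑ i, π i j) (fun _ => 1 / (m:ℝ))
            + (1 - s) * genKL u (fun _ => 1 / (m:ℝ)) := by
        simp only [genKL]
        rw [Finset.mul_sum, Finset.mul_sum, ← Finset.sum_add_distrib]
        refine Finset.sum_le_sum fun j _ => ?_
        rw [hColsum j]
        exact convex_kl ham (Finset.sum_nonneg fun i _ => hπ i j) (hu j) hs0 hs1
      -- value of genKL u b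
      have hKU : genKL u (fun _ => 1 / (m:ℝ))
          = 1 - (∑ j, ‖x' - xt j‖ ^ 2 * u j) / κ - q * Real.log q - q := by
        simp only [genKL]
        have hterm : ∀ j : Fin m, u j * Real.log (u j / (1 / (m:ℝ))) - u j + 1 / (m:ℝ)
            = 1 / (m:ℝ) - ‖x' - xt j‖ ^ 2 * u j / κ - Real.log q * u j - u j := by
          intro j
          have h1 : u j / (1 / (m:ℝ)) = E j / q := by
            simp only [hudef]
            field_simp
          rw [h1, Real.log_div (hE j).ne' hq.ne']
          simp only [hEdef, Real.log_exp]
          ring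
        calc ∑ j, (u j * Real.log (u j / (1 / (m:ℝ))) - u j + 1 / (m:ℝ))
            = ∑ j, (1 / (m:ℝ) - ‖x' - xt j‖ ^ 2 * u j / κ - Real.log q * u j - u j) :=
              Finset.sum_congr rfl fun j _ => hterm j
          _ = (∑ _j : Fin m, 1 / (m:ℝ)) - (∑ j, ‖x' - xt j‖ ^ 2 * u j / κ)
              - (∑ j, Real.log q * u j) - ∑ j, u j := by
              rw [Finset.sum_sub_distrib, Finset.sum_sub_distrib, Finset.sum_sub_distrib]
          _ = 1 - (∑ j, ‖x' - xt j‖ ^ 2 * u j) / κ - q * Real.log q - q := by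
              have hsum1 : (∑ _j : Fin m, (1:ℝ)/(m:ℝ)) = 1 := by
                rw [Finset.sum_const, Finset.card_univ, Fintype.card_fin, nsmul_eq_mul,
                  mul_one_div_cancel hm']
              rw [hsum1, ← Finset.sum_div, ← Finset.mul_sum, hU]
              ring
      rw [hA, hB]
      rw [hKU] at hCcol
      have hCcol' := mul_le_mul_of_nonneg_left hCcol hκ.le
      have hobj0 : 0 ≤ (∑ i, ∑ j, ‖x i - xt j‖ ^ 2 * π i j)
          + κ * genKL (fun i => ∑ j, π i j) (fun _ => 1 / (n:ℝ))
          + κ * genKL (fun j => ∑ i, π i j) (fun _ => 1 / (m:ℝ)) :=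
        UOT_obj_nonneg (fun i j => by positivity) (fun _ => han) (fun _ => ham) hκ.le hπ
      exact final_arith hκ hN hs1 h1s hCcol' hobj0 hemain
    have h2 : sInf {c : ℝ | ∃ π : Matrix (Fin (n+1)) (Fin m) ℝ, (∀ i j, 0 ≤ π i j) ∧
          c = (∑ i, ∑ j, ‖(Fin.snoc x x' : Fin (n+1) → EuclideanSpace ℝ (Fin d)) i - xt j‖ ^ 2 * π i j)
              + κ * genKL (fun i => ∑ j, π i j) (fun _ => 1 / ((n:ℝ) + 1))
              + κ * genKL (fun j => ∑ i, π i j) (fun _ => 1 / (m:ℝ))}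
          - 2 * κ * (1 - Real.exp (-(∑ j, ‖x' - xt j‖ ^ 2) / (2 * κ))) / ((n:ℝ) + 1)
        ≤ sInf {c : ℝ | ∃ π : Matrix (Fin n) (Fin m) ℝ, (∀ i j, 0 ≤ π i j) ∧
          c = (∑ i, ∑ j, ‖x i - xt j‖ ^ 2 * π i j)
              + κ * genKL (fun i => ∑ j, π i j) (fun _ => 1 / (n:ℝ))
              + κ * genKL (fun j => ∑ i, π i j) (fun _ => 1 / (m:ℝ))} :=
      le_csInf hBne (fun c hc => by
        have := key c hc
        linarith)
    linarith [h2]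

  · have he := Real.exp_pos (-(∑ j, ‖x' - xt j‖ ^ 2) / (2 * κ))
    have h2 : 2 * κ * (1 - Real.exp (-(∑ j, ‖x' - xt j‖ ^ 2) / (2 * κ))) ≤ 2 * κ := by
      nlinarith [he]
    exact (div_le_div_iff_of_pos_right hN).2 h2
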